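/- Let μ be a probability measure on (E, B(E)) and Π a Markov kernel on E reversible with respect to μ. Assume there exists ε > 0 such that Π(x,A) ≥ ε μ(A) for all x ∈ E and A ∈ B(E). Then for any probability measure ν ≪ μ with dν/dμ ∈ L²(E,μ) and any k ≥ 1, ‖νΠ^k − μ‖_TV ≤ (1/2) ‖ν − μ‖_{L²(E,μ)} · (1 − ε)^k. -/

import Mathlib

open MeasureTheory ProbabilityTheory
open scoped ENNReal

/-- The `n`-fold iterate of a Markov kernel: `kpow P 0 = id`, `kpow P (n+1) = P^n ∘ P`. -/
noncomputable def kpow {α : Type*} [MeasurableSpace α] (P : Kernel α α) : ℕ → Kernel α α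
  | 0 => Kernel.id
  | (n + 1) => (kpow P n).comp P

/-- The `L²(μ)` norm of the difference `ν - μ`, for `ν ≪ μ`:
`‖ν - μ‖_{L²(μ)} = (∫ (dν/dμ - 1)² dμ)^{1/2}`. -/
noncomputable def l2Dist {α : Type*} [MeasurableSpace α] (ν μ : Measure α) : ℝ :=
  Real.sqrt (∫ x, ((ν.rnDeriv μ x).toReal - 1) ^ 2 ∂μ)

/-- Total variation distance `‖μ - ν‖_TV = (1/2) sup_{f : X → [-1,1] measurable} |μ(f) - ν(f)|`. -/
noncomputable def tvDist {α : Type*} [MeasurableSpace α] (μ ν : Measure α) : ℝ :=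
  (1 / 2) * sSup {r : ℝ | ∃ f : α → ℝ, Measurable f ∧ (∀ x, f x ∈ Set.Icc (-1 : ℝ) 1) ∧
    r = |(∫ x, f x ∂μ) - ∫ x, f x ∂ν|}

section AuxGeneral
variable {α β : Type*} [MeasurableSpace α] [MeasurableSpace β]

/-- A bounded measurable function is integrable with respect to a finite measure. -/
lemma integrable_of_bdd {m : Measure α} [IsFiniteMeasure m] {f : α → ℝ}
    (hf : Measurable f) (hb : ∀ x, |f x| ≤ 1) : Integrable f m :=
  (integrable_const (1 : ℝ)).mono' hf.aestronglyMeasurable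
    (Filter.Eventually.of_forall fun x => by simpa using hb x)

/-- Bochner integral of a bounded measurable function against `m.bind κ`. -/
lemma integral_bind_bdd (m : Measure α) [IsProbabilityMeasure m]
    (κ : Kernel α β) [IsMarkovKernel κ] {f : β → ℝ}
    (hf : Measurable f) (hb : ∀ y, |f y| ≤ 1) :
    ∫ y, f y ∂(m.bind (fun x => κ x)) = ∫ x, ∫ y, f y ∂(κ x) ∂m := by
  have hpos : Measurable fun y => ENNReal.ofReal (f y) := hf.ennreal_ofReal
  have hneg : Measurable fun y => ENNReal.ofReal (-f y) := hf.neg.ennreal_ofReal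
  have hble : ∀ (g : β → ℝ≥0∞) (_ : ∀ y, g y ≤ 1) (x : α), ∫⁻ y, g y ∂(κ x) ≤ 1 := by
    intro g hg x
    calc ∫⁻ y, g y ∂(κ x) ≤ ∫⁻ _, 1 ∂(κ x) := lintegral_mono hg
    _ = 1 := by simp
  have hb1 : ∀ y, ENNReal.ofReal (f y) ≤ 1 := fun y => by
    rw [← ENNReal.ofReal_one]; exact ENNReal.ofReal_le_ofReal ((abs_le.1 (hb y)).2)
  have hb2 : ∀ y, ENNReal.ofReal (-f y) ≤ 1 := fun y => by
    rw [← ENNReal.ofReal_one]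
    exact ENNReal.ofReal_le_ofReal (by linarith [(abs_le.1 (hb y)).1])
  have hmeas1 : Measurable fun x => ∫⁻ y, ENNReal.ofReal (f y) ∂(κ x) :=
    Measurable.lintegral_kernel hpos
  have hmeas2 : Measurable fun x => ∫⁻ y, ENNReal.ofReal (-f y) ∂(κ x) :=
    Measurable.lintegral_kernel hneg
  haveI : IsProbabilityMeasure (m.bind (fun x => κ x)) := by
    constructor
    rw [Measure.bind_apply MeasurableSet.univ (Kernel.measurable κ).aemeasurable]
    simp
  have hint : Integrable f (m.bind (fun x => κ x)) := integrable_of_bdd hf hb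
  rw [integral_eq_lintegral_pos_part_sub_lintegral_neg_part hint,
    Measure.lintegral_bind (Kernel.measurable κ).aemeasurable hpos.aemeasurable,
    Measure.lintegral_bind (Kernel.measurable κ).aemeasurable hneg.aemeasurable]
  rw [← integral_toReal hmeas1.aemeasurable
      (Filter.Eventually.of_forall fun x => lt_of_le_of_lt (hble _ hb1 x) ENNReal.one_lt_top),
    ← integral_toReal hmeas2.aemeasurable
      (Filter.Eventually.of_forall fun x => lt_of_le_of_lt (hble _ hb2 x) ENNReal.one_lt_top)]
  have hi1 : Integrable (fun x => (∫⁻ y, ENNReal.ofReal (f y) ∂(κ x)).toReal) m := by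
    refine integrable_of_bdd hmeas1.ennreal_toReal fun x => ?_
    rw [abs_of_nonneg ENNReal.toReal_nonneg]
    exact ENNReal.toReal_le_of_le_ofReal zero_le_one (by simpa using hble _ hb1 x)
  have hi2 : Integrable (fun x => (∫⁻ y, ENNReal.ofReal (-f y) ∂(κ x)).toReal) m := by
    refine integrable_of_bdd hmeas2.ennreal_toReal fun x => ?_
    rw [abs_of_nonneg ENNReal.toReal_nonneg]
    exact ENNReal.toReal_le_of_le_ofReal zero_le_one (by simpa using hble _ hb2 x)
  rw [← integral_sub hi1 hi2]
  refine integral_congr_ae (Filter.Eventually.of_forall fun x => ?_)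
  exact (integral_eq_lintegral_pos_part_sub_lintegral_neg_part (integrable_of_bdd hf hb)).symm

/-- The set of values whose supremum defines twice the TV distance. -/
def tvSet (μ ν : Measure α) : Set ℝ :=
  {r : ℝ | ∃ f : α → ℝ, Measurable f ∧ (∀ x, f x ∈ Set.Icc (-1 : ℝ) 1) ∧
    r = |(∫ x, f x ∂μ) - ∫ x, f x ∂ν|}

lemma tvDist_eq (μ ν : Measure α) : tvDist μ ν = (1 / 2) * sSup (tvSet μ ν) := rfl

lemma zero_mem_tvSet (μ ν : Measure α) : (0 : ℝ) ∈ tvSet μ ν :=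
  ⟨0, measurable_const, fun x => ⟨by norm_num, by norm_num⟩, by simp⟩

lemma tvSet_bddAbove (μ ν : Measure α) [IsProbabilityMeasure μ] [IsProbabilityMeasure ν] :
    BddAbove (tvSet μ ν) := by
  refine ⟨2, fun r hr => ?_⟩
  obtain ⟨f, hf, hb, rfl⟩ := hr
  have h1 : ‖∫ x, f x ∂μ‖ ≤ 1 := by
    have := norm_integral_le_of_norm_le_const (μ := μ) (f := f) (C := 1)
      (Filter.Eventually.of_forall fun x => by
        rw [Real.norm_eq_abs, abs_le]; exact ⟨(hb x).1, (hb x).2⟩)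
    simpa using this
  have h2 : ‖∫ x, f x ∂ν‖ ≤ 1 := by
    have := norm_integral_le_of_norm_le_const (μ := ν) (f := f) (C := 1)
      (Filter.Eventually.of_forall fun x => by
        rw [Real.norm_eq_abs, abs_le]; exact ⟨(hb x).1, (hb x).2⟩)
    simpa using this
  calc |(∫ x, f x ∂μ) - ∫ x, f x ∂ν| ≤ ‖∫ x, f x ∂μ‖ + ‖∫ x, f x ∂ν‖ := abs_sub _ _
  _ ≤ 2 := by linarith

lemma tvSet_sSup_nonneg (μ ν : Measure α) [IsProbabilityMeasure μ] [IsProbabilityMeasure ν] :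
    0 ≤ sSup (tvSet μ ν) :=
  le_csSup (tvSet_bddAbove μ ν) (zero_mem_tvSet μ ν)

end AuxGeneral

section MainAux
variable {E : Type*} [MeasurableSpace E]

/-- Reversibility implies stationarity: `μ P = μ`. -/
lemma bind_stationary (μ : Measure E) [IsProbabilityMeasure μ] (P : Kernel E E)
    [IsMarkovKernel P]
    (hrev : ∀ A B : Set E, MeasurableSet A → MeasurableSet B →
      ∫⁻ x in A, P x B ∂μ = ∫⁻ x in B, P x A ∂μ) :
    μ.bind (fun x => P x) = μ := by
  ext A hA
  rw [Measure.bind_apply hA (Kernel.measurable P).aemeasurable]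
  have := hrev Set.univ A MeasurableSet.univ hA
  rw [setLIntegral_univ] at this
  rw [this]
  simp

lemma isProbabilityMeasure_bind (ν : Measure E) [IsProbabilityMeasure ν] (P : Kernel E E)
    [IsMarkovKernel P] : IsProbabilityMeasure (ν.bind (fun x => P x)) := by
  constructor
  rw [Measure.bind_apply MeasurableSet.univ (Kernel.measurable P).aemeasurable]
  simp

/-- One-step contraction of the TV supremum under the Doeblin minorization condition. -/
lemma contraction_step (μ : Measure E) [IsProbabilityMeasure μ] (P : Kernel E E)
    [IsMarkovKernel P]
    (hrev : ∀ A B : Set E, MeasurableSet A → MeasurableSet B →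
      ∫⁻ x in A, P x B ∂μ = ∫⁻ x in B, P x A ∂μ)
    (ε : ℝ) (hε : 0 < ε) (hε1 : ε ≤ 1)
    (hmin : ∀ x : E, ∀ A : Set E, MeasurableSet A → ENNReal.ofReal ε * μ A ≤ P x A)
    (ν : Measure E) [IsProbabilityMeasure ν] :
    sSup (tvSet (ν.bind (fun x => P x)) μ) ≤ (1 - ε) * sSup (tvSet ν μ) := by
  haveI := isProbabilityMeasure_bind ν P
  have hRHS : 0 ≤ (1 - ε) * sSup (tvSet ν μ) :=
    mul_nonneg (by linarith) (tvSet_sSup_nonneg ν μ)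
  refine Real.sSup_le ?_ hRHS
  rintro r ⟨f, hf, hb, rfl⟩
  have hb' : ∀ y, |f y| ≤ 1 := fun y => abs_le.2 ⟨(hb y).1, (hb y).2⟩
  set c := ∫ y, f y ∂μ with hc
  have hεμ_le : ∀ x, (ENNReal.ofReal ε) • μ ≤ P x := fun x =>
    Measure.le_iff.2 fun s hs => by
      rw [Measure.smul_apply, smul_eq_mul]; exact hmin x s hs
  haveI : IsFiniteMeasure ((ENNReal.ofReal ε) • μ) := by
    constructor
    rw [Measure.smul_apply, smul_eq_mul, measure_univ, mul_one]
    exact ENNReal.ofReal_lt_top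
  set ρ : E → Measure E := fun x => P x - ENNReal.ofReal ε • μ with hρ
  have hρ_univ : ∀ x, ρ x Set.univ = ENNReal.ofReal (1 - ε) := by
    intro x
    rw [hρ]
    simp only
    rw [Measure.sub_apply MeasurableSet.univ (hεμ_le x), measure_univ,
      Measure.smul_apply, smul_eq_mul, measure_univ, mul_one,
      ENNReal.ofReal_sub _ hε.le, ENNReal.ofReal_one]
  have hρfin : ∀ x, IsFiniteMeasure (ρ x) := fun x => by
    constructor
    rw [hρ_univ x]
    exact ENNReal.ofReal_lt_top
  have hdecomp : ∀ x, ρ x + ENNReal.ofReal ε • μ = P x := fun x =>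
    Measure.sub_add_cancel_of_le (hεμ_le x)
  set g : E → ℝ := fun x => ∫ y, f y ∂(ρ x) with hg
  have hPf : ∀ x, ∫ y, f y ∂(P x) = g x + ε * c := by
    intro x
    haveI := hρfin x
    rw [← hdecomp x, integral_add_measure (integrable_of_bdd hf hb')
      (integrable_of_bdd hf hb'), integral_smul_measure,
      ENNReal.toReal_ofReal hε.le, smul_eq_mul]
  have hg_bdd : ∀ x, |g x| ≤ 1 - ε := by
    intro x
    haveI := hρfin x
    have := norm_integral_le_of_norm_le_const (μ := ρ x) (f := f) (C := 1)
      (Filter.Eventually.of_forall fun y => by rw [Real.norm_eq_abs]; exact hb' y)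
    rw [Real.norm_eq_abs] at this
    calc |g x| ≤ 1 * ((ρ x) Set.univ).toReal := this
    _ = 1 - ε := by rw [one_mul, hρ_univ x, ENNReal.toReal_ofReal (by linarith)]
  have hg_meas : Measurable g := by
    have h1 : StronglyMeasurable fun x => ∫ y, f y ∂(P x) := by
      exact StronglyMeasurable.integral_kernel_prod_right' (κ := P)
        ((hf.comp measurable_snd).stronglyMeasurable)
    have h2 : g = fun x => (∫ y, f y ∂(P x)) - ε * c := funext fun x => by
      rw [hPf x]; ring
    rw [h2]
    exact h1.measurable.sub measurable_const
  have hgint : ∀ (m : Measure E) [IsProbabilityMeasure m], Integrable g m := by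
    intro m _
    exact integrable_of_bdd hg_meas fun x => le_trans (hg_bdd x) (by linarith)
  have hexp : ∀ (m : Measure E) [IsProbabilityMeasure m],
      ∫ y, f y ∂(m.bind (fun x => P x)) = (∫ x, g x ∂m) + ε * c := by
    intro m _
    rw [integral_bind_bdd m P hf hb']
    rw [integral_congr_ae (Filter.Eventually.of_forall hPf)]
    rw [integral_add (hgint m) (integrable_const _), integral_const]
    simp
  have hkey : (∫ y, f y ∂(ν.bind (fun x => P x))) - c
      = (∫ x, g x ∂ν) - ∫ x, g x ∂μ := by
    have h0 : (∫ y, f y ∂(μ.bind fun x => P x)) = c := by rw [bind_stationary μ P hrev]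
    have h3 := hexp μ
    rw [h0] at h3
    have h2 : ∫ x, g x ∂μ = c - ε * c := by linarith
    rw [hexp ν, h2]
    ring
  rw [hkey]
  rcases eq_or_lt_of_le hε1 with hone | hlt
  · have : ∀ x, g x = 0 := fun x => abs_nonpos_iff.1 (by
      have h4 := hg_bdd x; rw [← hone] at h4; simpa using h4)
    simp only [this]
    simpa using hRHS
  · set g1 : E → ℝ := fun x => g x / (1 - ε) with hg1
    have h1ε : (0:ℝ) < 1 - ε := by linarith
    have hg1b : ∀ x, g1 x ∈ Set.Icc (-1 : ℝ) 1 := by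
      intro x
      have : |g1 x| ≤ 1 := by
        rw [hg1]
        simp only
        rw [abs_div, abs_of_pos h1ε, div_le_one h1ε]
        exact hg_bdd x
      exact ⟨(abs_le.1 this).1, (abs_le.1 this).2⟩
    have hmem : |(∫ x, g1 x ∂ν) - ∫ x, g1 x ∂μ| ∈ tvSet ν μ :=
      ⟨g1, hg_meas.div_const _, hg1b, rfl⟩
    have hle := le_csSup (tvSet_bddAbove ν μ) hmem
    have heq : (∫ x, g x ∂ν) - ∫ x, g x ∂μ = (1 - ε) * ((∫ x, g1 x ∂ν) - ∫ x, g1 x ∂μ) := by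
      rw [hg1]
      simp only [integral_div]
      field_simp
    rw [heq, abs_mul, abs_of_pos h1ε]
    exact mul_le_mul_of_nonneg_left hle h1ε.le

instance kpow_markov (P : Kernel E E) [IsMarkovKernel P] (k : ℕ) :
    IsMarkovKernel (kpow P k) := by
  induction k with
  | zero => exact (by infer_instance : IsMarkovKernel (Kernel.id (α := E)))
  | succ n ih => exact (by unfold kpow; infer_instance)

lemma bind_kpow_zero (ν : Measure E) (P : Kernel E E) :
    ν.bind (fun x => kpow P 0 x) = ν := by
  show ν.bind (fun x => Kernel.id x) = ν
  simp only [Kernel.id_apply]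
  exact Measure.bind_dirac

lemma bind_kpow_succ (ν : Measure E) (P : Kernel E E) [IsMarkovKernel P] (k : ℕ) :
    ν.bind (fun x => kpow P (k+1) x)
      = (ν.bind (fun x => P x)).bind (fun x => kpow P k x) := by
  have h : ∀ x, kpow P (k+1) x = (P x).bind (fun y => kpow P k y) := fun x => by
    show ((kpow P k).comp P) x = _
    rw [Kernel.comp_apply]
  rw [funext h, ← Measure.bind_bind (Kernel.measurable P).aemeasurable (Kernel.measurable (kpow P k)).aemeasurable]

/-- Iterated contraction for `kpow`. -/
lemma contraction_iter (μ : Measure E) [IsProbabilityMeasure μ] (P : Kernel E E)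
    [IsMarkovKernel P]
    (hrev : ∀ A B : Set E, MeasurableSet A → MeasurableSet B →
      ∫⁻ x in A, P x B ∂μ = ∫⁻ x in B, P x A ∂μ)
    (ε : ℝ) (hε : 0 < ε) (hε1 : ε ≤ 1)
    (hmin : ∀ x : E, ∀ A : Set E, MeasurableSet A → ENNReal.ofReal ε * μ A ≤ P x A)
    (k : ℕ) :
    ∀ (ν : Measure E) [IsProbabilityMeasure ν],
      sSup (tvSet (ν.bind (fun x => kpow P k x)) μ) ≤ (1 - ε) ^ k * sSup (tvSet ν μ) := by
  induction k with
  | zero =>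
    intro ν _
    rw [bind_kpow_zero]
    simp
  | succ n ih =>
    intro ν _
    haveI := isProbabilityMeasure_bind ν P
    rw [bind_kpow_succ]
    calc sSup (tvSet ((ν.bind (fun x => P x)).bind (fun x => kpow P n x)) μ)
        ≤ (1 - ε) ^ n * sSup (tvSet (ν.bind (fun x => P x)) μ) := ih _
    _ ≤ (1 - ε) ^ n * ((1 - ε) * sSup (tvSet ν μ)) := by
        exact mul_le_mul_of_nonneg_left
          (contraction_step μ P hrev ε hε hε1 hmin ν) (pow_nonneg (by linarith) n)
    _ = (1 - ε) ^ (n + 1) * sSup (tvSet ν μ) := by ring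

/-- The TV supremum is bounded by the `L²` distance (Cauchy–Schwarz). -/
lemma sup_le_l2 (μ ν : Measure E) [IsProbabilityMeasure μ] [IsProbabilityMeasure ν]
    (hν : ν ≪ μ) (hL2 : MemLp (fun x => (ν.rnDeriv μ x).toReal) 2 μ) :
    sSup (tvSet ν μ) ≤ Real.sqrt (∫ x, ((ν.rnDeriv μ x).toReal - 1) ^ 2 ∂μ) := by
  refine Real.sSup_le ?_ (Real.sqrt_nonneg _)
  rintro r ⟨f, hf, hb, rfl⟩
  have hb' : ∀ y, |f y| ≤ 1 := fun y => abs_le.2 ⟨(hb y).1, (hb y).2⟩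
  set g : E → ℝ := fun x => (ν.rnDeriv μ x).toReal with hg
  set h : E → ℝ := fun x => g x - 1 with hh
  have hgint : Integrable g μ := Measure.integrable_toReal_rnDeriv
  have hhint : Integrable h μ := hgint.sub (integrable_const 1)
  have hfmeas : AEStronglyMeasurable f μ := hf.aestronglyMeasurable
  have hfint : Integrable f μ :=
    (integrable_const (1 : ℝ)).mono' hfmeas
      (Filter.Eventually.of_forall fun x => by simpa using hb' x)
  have hprod : Integrable (fun x => f x * h x) μ :=
    hhint.bdd_mul hfmeas (Filter.Eventually.of_forall (fun x => (by rw [Real.norm_eq_abs]; exact hb' x : ‖f x‖ ≤ 1)))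
  have h1 : ∫ x, f x ∂ν = ∫ x, g x * f x ∂μ := by
    rw [← MeasureTheory.integral_rnDeriv_smul hν]
    simp [smul_eq_mul, hg]
  have h2 : (∫ x, f x ∂ν) - ∫ x, f x ∂μ = ∫ x, f x * h x ∂μ := by
    rw [h1, ← integral_sub]
    · refine integral_congr_ae (Filter.Eventually.of_forall fun x => ?_)
      simp only [hh]
      ring
    · exact hgint.bdd_mul hfmeas (Filter.Eventually.of_forall (fun x => (by rw [Real.norm_eq_abs]; exact hb' x : ‖f x‖ ≤ 1))) |>.congr
        (Filter.Eventually.of_forall fun x => by ring)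
    · exact hfint
  have h3 : |(∫ x, f x ∂ν) - ∫ x, f x ∂μ| ≤ ∫ x, |h x| ∂μ := by
    rw [h2]
    calc |∫ x, f x * h x ∂μ| ≤ ∫ x, |f x| * |h x| ∂μ := by
          simpa [Real.norm_eq_abs, abs_mul] using
            norm_integral_le_integral_norm (fun x => f x * h x) (μ := μ)
    _ ≤ ∫ x, |h x| ∂μ := by
          refine integral_mono (by simpa [abs_mul] using hprod.abs) hhint.abs fun x => ?_
          exact mul_le_of_le_one_left (abs_nonneg _) (hb' x)
  refine le_trans h3 ?_
  have hpq : (2:ℝ).HolderConjugate 2 := Real.HolderConjugate.two_two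
  have hmem : MemLp (fun x => |h x|) (ENNReal.ofReal 2) μ := by
    have h4 : MemLp h 2 μ := hL2.sub (memLp_const 1)
    have h5 := h4.norm
    have : (ENNReal.ofReal 2) = (2 : ℝ≥0∞) := by norm_num
    rw [this]
    simpa [Real.norm_eq_abs] using h5
  have hone : MemLp (fun _ : E => (1:ℝ)) (ENNReal.ofReal 2) μ := memLp_const 1
  have hcs := integral_mul_le_Lp_mul_Lq_of_nonneg hpq
    (Filter.Eventually.of_forall fun x => abs_nonneg (h x))
    (Filter.Eventually.of_forall fun _ => zero_le_one) hmem hone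
  simp only [mul_one] at hcs
  have hr1 : ∫ a : E, (1:ℝ) ^ (2:ℝ) ∂μ = 1 := by simp
  rw [hr1] at hcs
  have hr2 : ∫ a, |h a| ^ (2:ℝ) ∂μ = ∫ a, h a ^ 2 ∂μ := by
    refine integral_congr_ae (Filter.Eventually.of_forall fun a => ?_)
    show |h a| ^ (2:ℝ) = h a ^ 2
    rw [show ((2:ℝ) = ((2:ℕ):ℝ)) by norm_num, Real.rpow_natCast, sq_abs]
  rw [hr2] at hcs
  simp only [Real.one_rpow, mul_one] at hcs
  calc ∫ x, |h x| ∂μ ≤ (∫ a, h a ^ 2 ∂μ) ^ ((1:ℝ)/2) := hcs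
  _ = Real.sqrt (∫ x, (g x - 1) ^ 2 ∂μ) := by rw [Real.sqrt_eq_rpow]

end MainAux

/-- For a `μ`-reversible Markov kernel `Π` satisfying the uniform minorization
`Π(x, A) ≥ ε μ(A)`: for every probability measure `ν ≪ μ` with `dν/dμ ∈ L²(μ)` and every
`k ≥ 1`, `‖νΠ^k - μ‖_TV ≤ (1/2) ‖ν - μ‖_{L²(μ)} (1 - ε)^k`. -/
theorem minorization_tv_convergence {E : Type*} [MeasurableSpace E]
    (μ : Measure E) [IsProbabilityMeasure μ]
    (P : Kernel E E) [IsMarkovKernel P]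
    (hrev : ∀ A B : Set E, MeasurableSet A → MeasurableSet B →
      ∫⁻ x in A, P x B ∂μ = ∫⁻ x in B, P x A ∂μ)
    (ε : ℝ) (hε : 0 < ε)
    (hmin : ∀ x : E, ∀ A : Set E, MeasurableSet A → ENNReal.ofReal ε * μ A ≤ P x A)
    (ν : Measure E) [IsProbabilityMeasure ν] (hν : ν ≪ μ)
    (hL2 : MemLp (fun x => (ν.rnDeriv μ x).toReal) 2 μ)
    (k : ℕ) (hk : 1 ≤ k) :
    tvDist (ν.bind (fun x => kpow P k x)) μ ≤ (1 / 2) * l2Dist ν μ * (1 - ε) ^ k := by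
  have hne : Nonempty E := by
    by_contra hemp
    rw [not_nonempty_iff] at hemp
    have h0 : μ Set.univ = 0 := by
      rw [Set.univ_eq_empty_iff.2 hemp]
      exact measure_empty
    rw [measure_univ] at h0
    exact one_ne_zero h0
  obtain ⟨x0⟩ := hne
  have hε1 : ε ≤ 1 := by
    have h1 := hmin x0 Set.univ MeasurableSet.univ
    rw [measure_univ, mul_one, measure_univ] at h1
    rw [← ENNReal.ofReal_one] at h1
    exact (ENNReal.ofReal_le_ofReal_iff zero_le_one).1 h1
  have hpow : (0:ℝ) ≤ (1 - ε) ^ k := pow_nonneg (by linarith) k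
  rw [tvDist_eq]
  calc (1/2 : ℝ) * sSup (tvSet (ν.bind (fun x => kpow P k x)) μ)
      ≤ (1/2 : ℝ) * ((1 - ε) ^ k * sSup (tvSet ν μ)) := by
        exact mul_le_mul_of_nonneg_left
          (contraction_iter μ P hrev ε hε hε1 hmin k ν) (by norm_num)
  _ ≤ (1/2 : ℝ) * ((1 - ε) ^ k * l2Dist ν μ) := by
        refine mul_le_mul_of_nonneg_left (mul_le_mul_of_nonneg_left ?_ hpow) (by norm_num)
        exact sup_le_l2 μ ν hν hL2
  _ = (1 / 2) * l2Dist ν μ * (1 - ε) ^ k := by ring
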